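/- arXiv:1508.00041 — 3 statements merged into one kernel-verified Lean document; each statement's English description precedes it below -/
import Mathlib

section
/- Let D be a division ring, M = (m_1,…,m_r), N = (n_1,…,n_s) partitions of m and n, and J a nonzero right submodule of T_{(M,N)}(D) with associated unique sequence (C_1,…,C_s) of right column reduced echelon matrices. Let 1 ≤ k ≤ s be the smallest index with C_k ≠ 0, and set C_{k−1} := 0 if k = 1. Then J is principal as a right submodule (i.e., J = A·T_N := {A·Q : Q ∈ T_N} for some A ∈ T_{(M,N)}(D)) if and only if rank(C_j) − rank(C_{j−1}) ≤ n_j for every k ≤ j ≤ s. -/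
open Matrix Pointwise

/-- The left row space of a matrix: the span of its rows in the left `D`-module of
row vectors `Fin n → D`. -/
def LRS {D : Type*} [DivisionRing D] {ι : Type*} {n : ℕ} (A : Matrix ι (Fin n) D) :
    Submodule D (Fin n → D) :=
  Submodule.span D (Set.range A)

/-- The right column space of a matrix: the span of its columns in the right `D`-module
(i.e. `Dᵐᵒᵖ`-module) of column vectors `Fin m → D`. -/
def RCS {D : Type*} [DivisionRing D] {ι : Type*} {m : ℕ} (A : Matrix (Fin m) ι D) :
    Submodule Dᵐᵒᵖ (Fin m → D) :=
  Submodule.span Dᵐᵒᵖ (Set.range Aᵀ)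

/-- `R` is a left row reduced echelon matrix: for some `t ≤ m`, the rows with (0-based)
index `≥ t` are zero, each of the first `t` rows has first nonzero entry `1`, located in
column `k i`, the `k i` are strictly increasing, and column `k i` is zero outside row `i`. -/
def IsRowReducedEchelon {D : Type*} [DivisionRing D] {m n : ℕ}
    (R : Matrix (Fin m) (Fin n) D) : Prop :=
  ∃ (t : ℕ) (ht : t ≤ m) (k : Fin t → Fin n),
    StrictMono k ∧
    (∀ i : Fin m, t ≤ (i : ℕ) → R i = 0) ∧
    (∀ i : Fin t, R (Fin.castLE ht i) (k i) = 1) ∧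
    (∀ (i : Fin t) (j : Fin n), (j : ℕ) < (k i : ℕ) → R (Fin.castLE ht i) j = 0) ∧
    (∀ (i : Fin t) (p : Fin m), (p : ℕ) ≠ (i : ℕ) → R p (k i) = 0)

/-- `C` is a right column reduced echelon matrix: its transpose is left row reduced
echelon (columns of `C` beyond the first `t` are zero, each of the first `t` columns has
first-from-the-top nonzero entry `1` located in row `k j`, the `k j` strictly increase,
and row `k j` is zero outside column `j`). -/
def IsColReducedEchelon {D : Type*} [DivisionRing D] {m n : ℕ}
    (C : Matrix (Fin m) (Fin n) D) : Prop :=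
  IsRowReducedEchelon Cᵀ

/-- `A` is upper triangular: the `(i,j)` entry vanishes whenever `i > j`. -/
def IsUpperTriangular {D : Type*} [Zero D] {m n : ℕ} (A : Matrix (Fin m) (Fin n) D) : Prop :=
  ∀ (i : Fin m) (j : Fin n), (j : ℕ) < (i : ℕ) → A i j = 0

/-- The index at which block `i` of the partition `M` starts. -/
def blockStart {r : ℕ} (M : Fin r → ℕ) (i : Fin r) : ℕ :=
  ∑ t ∈ Finset.Iio i, M t

theorem blockStart_add_lt {r : ℕ} (M : Fin r → ℕ) (i : Fin r) (a : Fin (M i)) :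
    blockStart M i + (a : ℕ) < ∑ t, M t := by
  have h2 : (a : ℕ) < M i := a.2
  have h1 : blockStart M i + M i ≤ ∑ t, M t := by
    have hins : i ∉ Finset.Iio i := by simp
    calc blockStart M i + M i = ∑ t ∈ insert i (Finset.Iio i), M t := by
          rw [Finset.sum_insert hins, blockStart, add_comm]
      _ ≤ ∑ t, M t := Finset.sum_le_sum_of_subset (Finset.subset_univ _)
  omega

/-- The global (row or column) index of the `a`-th entry of the `i`-th block of the
partition `M`. -/
def blockIdx {r : ℕ} (M : Fin r → ℕ) (i : Fin r) (a : Fin (M i)) : Fin (∑ t, M t) :=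
  ⟨blockStart M i + (a : ℕ), blockStart_add_lt M i a⟩

/-- Membership in the nest module `T_{(M,N)}(D)`: the `(i,j)` block vanishes whenever
`i > j`. -/
def IsNest {D : Type*} [Zero D] {r s : ℕ} (M : Fin r → ℕ) (N : Fin s → ℕ)
    (A : Matrix (Fin (∑ t, M t)) (Fin (∑ t, N t)) D) : Prop :=
  ∀ (i : Fin r) (j : Fin s) (a : Fin (M i)) (b : Fin (N j)),
    (j : ℕ) < (i : ℕ) → A (blockIdx M i a) (blockIdx N j b) = 0

/-- The `i`-th block row of a matrix whose rows are partitioned according to `M`. -/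
def blockRow {D : Type*} {r n : ℕ} (M : Fin r → ℕ)
    (A : Matrix (Fin (∑ t, M t)) (Fin n) D) (i : Fin r) :
    Matrix (Fin (M i)) (Fin n) D :=
  fun a q => A (blockIdx M i a) q

/-- The `j`-th block column of a matrix whose columns are partitioned according to `N`. -/
def blockCol {D : Type*} {s m : ℕ} (N : Fin s → ℕ)
    (A : Matrix (Fin m) (Fin (∑ t, N t)) D) (j : Fin s) :
    Matrix (Fin m) (Fin (N j)) D :=
  fun p b => A p (blockIdx N j b)

-- ====== auxiliary block lemmas ======

theorem blockStart_insert' {r : ℕ} (M : Fin r → ℕ) (i : Fin r) :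
    blockStart M i + M i = ∑ t ∈ insert i (Finset.Iio i), M t := by
  rw [Finset.sum_insert (by simp), blockStart, add_comm]

theorem blockStart_le_of_lt' {r : ℕ} (M : Fin r → ℕ) {i j : Fin r} (h : i < j) :
    blockStart M i + M i ≤ blockStart M j := by
  rw [blockStart_insert']
  refine Finset.sum_le_sum_of_subset ?_
  intro a ha
  simp only [Finset.mem_insert, Finset.mem_Iio] at ha ⊢
  rcases ha with rfl | ha
  · exact h
  · exact lt_trans ha h

theorem blockStart_succ' {s : ℕ} (N : Fin s → ℕ) (j : Fin s) (h : (j : ℕ) + 1 < s) :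
    blockStart N ⟨(j : ℕ) + 1, h⟩ = blockStart N j + N j := by
  rw [blockStart_insert', blockStart]
  congr 1
  ext a
  simp only [Finset.mem_Iio, Finset.mem_insert, Fin.lt_def, Fin.ext_iff]
  omega

theorem exists_block_rep' {s : ℕ} (N : Fin s → ℕ) (q : Fin (∑ t, N t)) :
    ∃ p : Σ j : Fin s, Fin (N j), (q : ℕ) = blockStart N p.1 + (p.2 : ℕ) := by
  have hs : 0 < s := by
    rcases Nat.eq_zero_or_pos s with rfl | h
    · exact absurd q.2 (by simp)
    · exact h
  classical
  set S : Finset (Fin s) := {j : Fin s | blockStart N j ≤ (q : ℕ)} with hS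
  have hne : S.Nonempty := by
    refine ⟨⟨0, hs⟩, ?_⟩
    have h0 : Finset.Iio (⟨0, hs⟩ : Fin s) = ∅ := by
      ext a; simp [Fin.lt_def]
    simp only [hS, Finset.mem_filter, Finset.mem_univ, true_and]; simp [blockStart, h0]
  set j := S.max' hne with hj
  have hjS : j ∈ S := S.max'_mem hne
  have hjle : blockStart N j ≤ (q : ℕ) := by simpa [hS] using hjS
  have hqlt : (q : ℕ) < blockStart N j + N j := by
    by_contra hcon
    push_neg at hcon
    rcases Nat.lt_or_ge ((j : ℕ) + 1) s with hlt | hge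
    · have hmem : (⟨(j : ℕ) + 1, hlt⟩ : Fin s) ∈ S := by
        simp only [hS, Finset.mem_filter, Finset.mem_univ, true_and]
        rw [blockStart_succ' N j hlt]
        exact hcon
      have := S.le_max' _ hmem
      rw [← hj] at this
      simp [Fin.le_def] at this
    · have hlast : ∀ t : Fin s, t ≤ j := fun t => by
        have h2 := t.2
        rw [Fin.le_def]
        omega
      have huniv : insert j (Finset.Iio j) = Finset.univ := by
        ext a
        simp only [Finset.mem_insert, Finset.mem_Iio, Finset.mem_univ, iff_true]
        rcases lt_or_eq_of_le (hlast a) with h | h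
        · exact Or.inr h
        · exact Or.inl h
      have hsum : blockStart N j + N j = ∑ t, N t := by
        rw [blockStart_insert', huniv]
      have := q.2
      omega
  exact ⟨⟨j, ⟨(q : ℕ) - blockStart N j, by omega⟩⟩, by simp; omega⟩

theorem blockIdx_inj' {s : ℕ} {N : Fin s → ℕ} {i j : Fin s} {a : Fin (N i)} {b : Fin (N j)}
    (h : blockIdx N i a = blockIdx N j b) : (⟨i, a⟩ : Σ t : Fin s, Fin (N t)) = ⟨j, b⟩ := by
  have hv : blockStart N i + (a : ℕ) = blockStart N j + (b : ℕ) := congrArg Fin.val h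
  have hij : i = j := by
    rcases lt_trichotomy i j with hlt | heq | hgt
    · have := blockStart_le_of_lt' N hlt
      have ha := a.2
      omega
    · exact heq
    · have := blockStart_le_of_lt' N hgt
      have hb := b.2
      omega
  subst hij
  have : a = b := Fin.ext (by omega)
  subst this
  rfl

noncomputable def blkPair {s : ℕ} (N : Fin s → ℕ) (q : Fin (∑ t, N t)) :
    Σ j : Fin s, Fin (N j) :=
  (exists_block_rep' N q).choose

theorem blkPair_spec {s : ℕ} (N : Fin s → ℕ) (q : Fin (∑ t, N t)) :
    blockIdx N (blkPair N q).1 (blkPair N q).2 = q :=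
  Fin.ext ((exists_block_rep' N q).choose_spec).symm

theorem blkPair_blockIdx {s : ℕ} (N : Fin s → ℕ) (j : Fin s) (b : Fin (N j)) :
    blkPair N (blockIdx N j b) = ⟨j, b⟩ :=
  blockIdx_inj' (blkPair_spec N (blockIdx N j b))

theorem blkPair_fst {s : ℕ} (N : Fin s → ℕ) (j : Fin s) (b : Fin (N j)) :
    (blkPair N (blockIdx N j b)).1 = j :=
  congrArg Sigma.fst (blkPair_blockIdx N j b)

-- ====== span lemmas ======

instance instModFinOpp (D : Type*) [DivisionRing D] : Module.Finite Dᵐᵒᵖ D := by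
  refine ⟨⟨{1}, ?_⟩⟩
  rw [eq_top_iff]
  intro a _
  have : a ∈ Submodule.span Dᵐᵒᵖ {(1 : D)} := by
    rw [Submodule.mem_span_singleton]
    exact ⟨MulOpposite.op a, by simp⟩
  simpa using this

section Spans

variable {D : Type*} [DivisionRing D] {m u w : ℕ}

theorem col_mul (C : Matrix (Fin m) (Fin u) D) (Y : Matrix (Fin u) (Fin w) D) (q : Fin w) :
    (C * Y)ᵀ q = ∑ p, MulOpposite.op (Y p q) • Cᵀ p := by
  ext i
  simp [Matrix.mul_apply, Finset.sum_apply]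

theorem col_mul_mem (C : Matrix (Fin m) (Fin u) D) (Y : Matrix (Fin u) (Fin w) D) (q : Fin w) :
    (C * Y)ᵀ q ∈ RCS C := by
  rw [col_mul]
  exact Submodule.sum_mem _ fun p _ =>
    Submodule.smul_mem _ _ (Submodule.subset_span (Set.mem_range_self p))

theorem exists_factor_iff (C : Matrix (Fin m) (Fin u) D) (X : Matrix (Fin m) (Fin w) D) :
    (∃ Y : Matrix (Fin u) (Fin w) D, X = C * Y) ↔ ∀ q, Xᵀ q ∈ RCS C := by
  constructor
  · rintro ⟨Y, rfl⟩ q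
    exact col_mul_mem C Y q
  · intro h
    have h' : ∀ q : Fin w, ∃ c : Fin u → Dᵐᵒᵖ, ∑ p, c p • Cᵀ p = Xᵀ q := fun q =>
      (Submodule.mem_span_range_iff_exists_fun Dᵐᵒᵖ).1 (h q)
    choose c hc using h'
    refine ⟨fun p q => (c q p).unop, ?_⟩
    ext i q
    have := congrFun (hc q) i
    simp only [Finset.sum_apply, Pi.smul_apply, Matrix.transpose_apply] at this
    refine this.symm.trans ?_
    exact Finset.sum_congr rfl fun p _ => rfl

theorem RCS_zero' : RCS (0 : Matrix (Fin m) (Fin u) D) = ⊥ := by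
  rw [RCS, eq_bot_iff]
  refine Submodule.span_le.2 ?_
  rintro x ⟨p, rfl⟩
  simp only [Matrix.transpose_zero, SetLike.mem_coe, Submodule.mem_bot]
  rfl

theorem RCS_apply_eq_zero {C : Matrix (Fin m) (Fin u) D} {i : Fin m}
    (h : ∀ p, C i p = 0) {x : Fin m → D} (hx : x ∈ RCS C) : x i = 0 := by
  have hle : RCS C ≤ LinearMap.ker (LinearMap.proj (R := Dᵐᵒᵖ) (φ := fun _ : Fin m => D) i) := by
    refine Submodule.span_le.2 ?_
    rintro y ⟨p, rfl⟩
    simp [LinearMap.mem_ker, h p]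
  simpa using hle hx

theorem finrank_span_range_le' {K V : Type*} [DivisionRing K] [AddCommGroup V] [Module K V]
    {n : ℕ} (v : Fin n → V) :
    Module.finrank K (Submodule.span K (Set.range v)) ≤ n := by
  classical
  refine (finrank_span_le_card (R := K) (Set.range v)).trans ?_
  rw [Set.toFinset_range]
  exact (Finset.card_image_le).trans (by simp)

theorem exists_extend' {K V : Type*} [DivisionRing K] [AddCommGroup V] [Module K V]
    (U W : Submodule K V) [FiniteDimensional K W] (hUW : U ≤ W) (n : ℕ)
    (h : Module.finrank K W ≤ Module.finrank K U + n) :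
    ∃ v : Fin n → V, (∀ i, v i ∈ W) ∧ U ⊔ Submodule.span K (Set.range v) = W := by
  classical
  obtain ⟨U'', hcompl⟩ := (U.comap W.subtype).exists_isCompl
  have hrk : Module.finrank K (U.comap W.subtype) + Module.finrank K U''
      = Module.finrank K W := Submodule.finrank_add_eq_of_isCompl hcompl
  have hmapU : (U.comap W.subtype).map W.subtype = U := by
    rw [Submodule.map_comap_subtype]
    exact inf_eq_right.2 hUW
  have hfrU : Module.finrank K (U.comap W.subtype) = Module.finrank K U := by
    conv_rhs => rw [← hmapU]
    exact (Submodule.finrank_map_subtype_eq W _).symm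
  set U2 : Submodule K V := U''.map W.subtype with hU2
  have hfrU2 : Module.finrank K U2 = Module.finrank K U'' :=
    Submodule.finrank_map_subtype_eq W U''
  have hd : Module.finrank K U2 ≤ n := by omega
  have hU2W : U2 ≤ W := Submodule.map_subtype_le W U''
  have : FiniteDimensional K U2 := Module.Finite.map _ _
  obtain b := Module.finBasis K U2
  set v : Fin n → V := fun i =>
    if h : (i : ℕ) < Module.finrank K U2 then (b ⟨i, h⟩ : V) else 0 with hv
  have hspan : Submodule.span K (Set.range v) = U2 := by
    apply le_antisymm
    · rw [Submodule.span_le]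
      rintro x ⟨i, rfl⟩
      by_cases hi : (i : ℕ) < Module.finrank K U2
      · simpa [hv, dif_pos hi] using (b ⟨i, hi⟩).2
      · simp [hv, dif_neg hi]
    · have hbs : Submodule.map U2.subtype (Submodule.span K (Set.range b)) = U2 := by
        rw [b.span_eq, Submodule.map_subtype_top]
      conv_lhs => rw [← hbs]
      rw [Submodule.map_span, ← Set.range_comp]
      apply Submodule.span_mono
      rintro x ⟨j, rfl⟩
      refine ⟨⟨(j : ℕ), lt_of_lt_of_le j.2 hd⟩, ?_⟩
      simp only [hv, Function.comp_apply]
      rw [dif_pos (show ((⟨(j : ℕ), lt_of_lt_of_le j.2 hd⟩ : Fin n) : ℕ)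
        < Module.finrank K U2 from j.2)]
      exact congrArg (fun t => ((b t : U2) : V)) (Fin.eta j j.2)
  refine ⟨v, ?_, ?_⟩
  · intro i
    by_cases hi : (i : ℕ) < Module.finrank K U2
    · rw [hv]
      simp only [dif_pos hi]
      exact hU2W (b ⟨i, hi⟩).2
    · rw [hv]; simp [dif_neg hi]
  · rw [hspan, hU2, ← hmapU, ← Submodule.map_sup, hcompl.codisjoint.eq_top,
      Submodule.map_subtype_top]

end Spans



-- ====== cumulative column spaces ======

section Vcum

variable {D : Type*} [DivisionRing D] {m' s : ℕ} {N : Fin s → ℕ}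

theorem blockCol_transpose (A : Matrix (Fin m') (Fin (∑ t, N t)) D) (j : Fin s) (b : Fin (N j)) :
    (blockCol N A j)ᵀ b = Aᵀ (blockIdx N j b) := rfl

/-- The span of the columns of `A` lying in block columns `≤ j`. -/
noncomputable def Vcum (N : Fin s → ℕ) (A : Matrix (Fin m') (Fin (∑ t, N t)) D) (j : Fin s) :
    Submodule Dᵐᵒᵖ (Fin m' → D) :=
  Submodule.span Dᵐᵒᵖ (Set.range fun p : Fin (∑ t, N t) =>
    if ((blkPair N p).1 : ℕ) ≤ (j : ℕ) then Aᵀ p else 0)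

theorem mem_Vcum (A : Matrix (Fin m') (Fin (∑ t, N t)) D) (j : Fin s) {i : Fin s}
    (hij : (i : ℕ) ≤ (j : ℕ)) (b : Fin (N i)) :
    Aᵀ (blockIdx N i b) ∈ Vcum N A j := by
  have h := blkPair_fst N i b
  have : (if ((blkPair N (blockIdx N i b)).1 : ℕ) ≤ (j : ℕ) then Aᵀ (blockIdx N i b) else 0)
      = Aᵀ (blockIdx N i b) := by
    rw [if_pos (by rw [h]; exact hij)]
  exact this ▸ Submodule.subset_span ⟨blockIdx N i b, rfl⟩

theorem Vcum_le (A : Matrix (Fin m') (Fin (∑ t, N t)) D) (j : Fin s)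
    {P : Submodule Dᵐᵒᵖ (Fin m' → D)}
    (h : ∀ i : Fin s, (i : ℕ) ≤ (j : ℕ) → ∀ b : Fin (N i), Aᵀ (blockIdx N i b) ∈ P) :
    Vcum N A j ≤ P := by
  refine Submodule.span_le.2 ?_
  rintro x ⟨p, rfl⟩
  show (if ((blkPair N p).1 : ℕ) ≤ (j : ℕ) then Aᵀ p else 0) ∈ P
  by_cases hc : ((blkPair N p).1 : ℕ) ≤ (j : ℕ)
  · rw [if_pos hc]
    have := h (blkPair N p).1 hc (blkPair N p).2
    rwa [blkPair_spec N p] at this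
  · rw [if_neg hc]; exact P.zero_mem

theorem Vcum_decomp (A : Matrix (Fin m') (Fin (∑ t, N t)) D) (j : Fin s) :
    Vcum N A j =
      (if h : 0 < (j : ℕ) then
        Vcum N A ⟨(j : ℕ) - 1, lt_of_le_of_lt (Nat.pred_le _) j.2⟩ else ⊥)
      ⊔ RCS (blockCol N A j) := by
  apply le_antisymm
  · refine Vcum_le A j ?_
    intro i hij b
    rcases eq_or_lt_of_le hij with heq | hlt
    · have : i = j := Fin.ext heq
      subst this
      exact Submodule.mem_sup_right (Submodule.subset_span ⟨b, rfl⟩)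
    · have h0 : 0 < (j : ℕ) := lt_of_le_of_lt (Nat.zero_le _) hlt
      rw [dif_pos h0]
      exact Submodule.mem_sup_left (mem_Vcum A _ (show (i : ℕ) ≤ (j : ℕ) - 1 by omega) b)
  · refine sup_le ?_ ?_
    · split
      · exact Vcum_le A _ fun i hij b =>
          mem_Vcum A j (Nat.le_trans hij (Nat.sub_le _ _)) b
      · exact bot_le
    · refine Submodule.span_le.2 ?_
      rintro x ⟨b, rfl⟩
      exact mem_Vcum A j le_rfl b

theorem Vcum_finrank (A : Matrix (Fin m') (Fin (∑ t, N t)) D) (j : Fin s) :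
    Module.finrank Dᵐᵒᵖ (Vcum N A j) ≤
      (if h : 0 < (j : ℕ) then
        Module.finrank Dᵐᵒᵖ (Vcum N A ⟨(j : ℕ) - 1, lt_of_le_of_lt (Nat.pred_le _) j.2⟩)
       else 0) + N j := by
  have hR : Module.finrank Dᵐᵒᵖ (RCS (blockCol N A j)) ≤ N j :=
    finrank_span_range_le' (blockCol N A j)ᵀ
  by_cases h0 : 0 < (j : ℕ)
  · rw [Vcum_decomp, dif_pos h0, dif_pos h0]
    refine le_trans (Submodule.finrank_add_le_finrank_add_finrank _ _) ?_
    exact Nat.add_le_add_left hR _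
  · rw [Vcum_decomp, dif_neg h0, dif_neg h0, bot_sup_eq, zero_add]
    exact hR

end Vcum

theorem isNest_one {D : Type*} [DivisionRing D] {s : ℕ} (N : Fin s → ℕ) :
    IsNest N N (1 : Matrix (Fin (∑ t, N t)) (Fin (∑ t, N t)) D) := by
  intro i j a b hij
  refine Matrix.one_apply_ne ?_
  intro hcon
  have := congrArg (fun p => ((Sigma.fst p : Fin s) : ℕ)) (blockIdx_inj' hcon)
  simp at this
  omega

theorem RCS_chain {D : Type*} [DivisionRing D] {s m' : ℕ}
    (C : Fin s → Matrix (Fin m') (Fin m') D)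
    (hasc : ∀ (j : Fin s) (hj : (j : ℕ) + 1 < s), RCS (C j) ≤ RCS (C ⟨(j : ℕ) + 1, hj⟩)) :
    ∀ i j : Fin s, (i : ℕ) ≤ (j : ℕ) → RCS (C i) ≤ RCS (C j) := by
  suffices H : ∀ d : ℕ, ∀ i j : Fin s, (j : ℕ) = (i : ℕ) + d → RCS (C i) ≤ RCS (C j) by
    intro i j hij
    exact H ((j : ℕ) - (i : ℕ)) i j (by omega)
  intro d
  induction d with
  | zero =>
    intro i j hij
    have : i = j := Fin.ext (by omega)
    subst this
    exact le_rfl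
  | succ d ih =>
    intro i j hij
    have hj2 := j.2
    have hlt : (i : ℕ) + d < s := by omega
    set j' : Fin s := ⟨(i : ℕ) + d, hlt⟩ with hj'
    have h1 : RCS (C i) ≤ RCS (C j') := ih i j' rfl
    have hlt2 : ((j' : ℕ)) + 1 < s := by simp [hj']; omega
    have h2 : RCS (C j') ≤ RCS (C ⟨(j' : ℕ) + 1, hlt2⟩) := hasc j' hlt2
    have : (⟨(j' : ℕ) + 1, hlt2⟩ : Fin s) = j := Fin.ext (by simp [hj']; omega)
    rw [this] at h2
    exact le_trans h1 h2


/-- A nonzero right submodule `J` of `T_{(M,N)}(D)` with associated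
sequence `(C_1, …, C_s)` and smallest index `k` with `C_k ≠ 0` is principal (i.e.
`J = A·T_N` for some `A ∈ T_{(M,N)}(D)`) iff `rank(C_j) − rank(C_{j−1}) ≤ n_j` for every
`k ≤ j ≤ s` (with `C_{k−1} := 0` if `k = 1`). -/
theorem rightSubmodule_nest_principal_iff_rank_cond
    (D : Type*) [DivisionRing D] (r s : ℕ) (M : Fin r → ℕ) (N : Fin s → ℕ)
    (hM : ∀ i, 0 < M i) (hN : ∀ j, 0 < N j)
    (J : AddSubgroup (Matrix (Fin (∑ t, M t)) (Fin (∑ t, N t)) D))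
    (hJne : J ≠ ⊥)
    (hJT : ∀ A ∈ J, IsNest M N A)
    (hJ : ∀ (A : Matrix (Fin (∑ t, M t)) (Fin (∑ t, N t)) D)
      (Q : Matrix (Fin (∑ t, N t)) (Fin (∑ t, N t)) D),
      IsNest N N Q → A ∈ J → A * Q ∈ J)
    (C : Fin s → Matrix (Fin (∑ t, M t)) (Fin (∑ t, M t)) D)
    (hCE : ∀ j, IsColReducedEchelon (C j))
    (hasc : ∀ (j : Fin s) (hj : (j : ℕ) + 1 < s), RCS (C j) ≤ RCS (C ⟨(j : ℕ) + 1, hj⟩))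
    (hblk : ∀ (j : Fin s) (i : Fin r), (j : ℕ) < (i : ℕ) →
      ∀ (a : Fin (M i)) (q : Fin (∑ t, M t)), C j (blockIdx M i a) q = 0)
    (hJdef : (J : Set (Matrix (Fin (∑ t, M t)) (Fin (∑ t, N t)) D)) =
      {A | ∀ j : Fin s, ∃ Y : Matrix (Fin (∑ t, M t)) (Fin (N j)) D,
        blockCol N A j = C j * Y})
    (k : Fin s) (hk : C k ≠ 0) (hk' : ∀ j : Fin s, (j : ℕ) < (k : ℕ) → C j = 0) :
    (∃ A : Matrix (Fin (∑ t, M t)) (Fin (∑ t, N t)) D, IsNest M N A ∧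
        (J : Set (Matrix (Fin (∑ t, M t)) (Fin (∑ t, N t)) D)) =
          {B | ∃ Q : Matrix (Fin (∑ t, N t)) (Fin (∑ t, N t)) D,
            IsNest N N Q ∧ B = A * Q}) ↔
      ∀ j : Fin s, (k : ℕ) ≤ (j : ℕ) →
        Module.finrank Dᵐᵒᵖ (RCS (C j)) -
            (if hj : 0 < (j : ℕ) then
              Module.finrank Dᵐᵒᵖ
                (RCS (C ⟨(j : ℕ) - 1, lt_of_le_of_lt (Nat.pred_le _) j.2⟩)) else 0)
          ≤ N j := by
  classical
  have hmemJ : ∀ B, B ∈ J ↔ ∀ j' : Fin s,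
      ∃ Y : Matrix (Fin (∑ t, M t)) (Fin (N j')) D, blockCol N B j' = C j' * Y := by
    intro B
    rw [← SetLike.mem_coe, hJdef]
    exact Iff.rfl
  constructor
  · rintro ⟨A, hAnest, hAset⟩ j hkj
    have hAJ : A ∈ J := by
      rw [← SetLike.mem_coe, hAset]
      exact ⟨1, isNest_one N, (Matrix.mul_one A).symm⟩
    have hAcols : ∀ (i : Fin s) (b : Fin (N i)), Aᵀ (blockIdx N i b) ∈ RCS (C i) := by
      intro i b
      obtain ⟨Y, hY⟩ := (hmemJ A).1 hAJ i
      have h2 := col_mul_mem (C i) Y b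
      rw [← hY, blockCol_transpose] at h2
      exact h2
    have hchain := RCS_chain C hasc
    have hkey : ∀ j' : Fin s, Vcum N A j' = RCS (C j') := by
      intro j'
      apply le_antisymm
      · exact Vcum_le A j' fun i hij b => hchain i j' hij (hAcols i b)
      · refine Submodule.span_le.2 ?_
        rintro x ⟨p, rfl⟩
        simp only [SetLike.mem_coe]
        set b0 : Fin (N j') := ⟨0, hN j'⟩ with hb0
        set q0 : Fin (∑ t, N t) := blockIdx N j' b0 with hq0
        set X : Matrix (Fin (∑ t, M t)) (Fin (∑ t, N t)) D :=
          fun i q => if q = q0 then C j' i p else 0 with hX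
        have hXJ : X ∈ J := by
          rw [hmemJ X]
          intro j2
          by_cases hj2 : j2 = j'
          · subst hj2
            refine ⟨fun a b => if b = b0 then (if a = p then 1 else 0) else 0, ?_⟩
            ext i b
            show blockCol N X j2 i b = ∑ a, C j2 i a * (if b = b0 then (if a = p then 1 else 0) else 0)
            simp only [blockCol, hX]
            by_cases hb : b = b0
            · subst hb
              rw [if_pos hq0.symm]
              simp [mul_ite, Finset.sum_ite_eq']
            · have hne : ¬(blockIdx N j2 b = q0) := by
                intro hcon
                rw [hq0] at hcon
                have hval : blockStart N j2 + (b : ℕ) = blockStart N j2 + (b0 : ℕ) :=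
                  congrArg Fin.val hcon
                exact hb (Fin.ext (by omega))
              rw [if_neg hne]
              simp [hb]
          · refine ⟨0, ?_⟩
            ext i b
            rw [Matrix.mul_zero]
            simp only [blockCol, hX]
            rw [if_neg]
            · rfl
            · intro hcon
              rw [hq0] at hcon
              have := congrArg (fun pr : Σ t : Fin s, Fin (N t) => ((pr.1 : Fin s) : ℕ))
                (blockIdx_inj' hcon)
              exact hj2 (Fin.ext this)
        rw [← SetLike.mem_coe, hAset] at hXJ
        obtain ⟨Q, hQnest, hXQ⟩ := hXJ
        have hcol : (C j')ᵀ p = Xᵀ q0 := by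
          ext i
          show C j' i p = if q0 = q0 then C j' i p else 0; rw [if_pos rfl]
        rw [hcol, hXQ, col_mul]
        refine Submodule.sum_mem _ ?_
        intro p' _
        by_cases hp' : ((blkPair N p').1 : ℕ) ≤ (j' : ℕ)
        · refine Submodule.smul_mem _ _ ?_
          have h3 := mem_Vcum A j' hp' (blkPair N p').2
          rwa [blkPair_spec] at h3
        · have hz : Q p' q0 = 0 := by
            have h1 := blkPair_spec N p'
            have h2 := hQnest (blkPair N p').1 j' (blkPair N p').2 b0 (by omega)
            rw [h1] at h2
            rw [hq0]
            exact h2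
          rw [hz]
          simp only [MulOpposite.op_zero, zero_smul]
          exact Submodule.zero_mem _
    have hrk := Vcum_finrank A j
    rw [hkey j] at hrk
    by_cases h0 : 0 < (j : ℕ)
    · rw [dif_pos h0] at hrk ⊢
      rw [hkey _] at hrk
      omega
    · rw [dif_neg h0] at hrk ⊢
      omega
  · intro hrk
    have hprevle : ∀ j : Fin s,
        (if h : 0 < (j : ℕ) then
          RCS (C ⟨(j : ℕ) - 1, lt_of_le_of_lt (Nat.pred_le _) j.2⟩) else ⊥) ≤ RCS (C j) := by
      intro j
      by_cases h0 : 0 < (j : ℕ)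
      · rw [dif_pos h0]
        have hpf : (j : ℕ) - 1 < s := lt_of_le_of_lt (Nat.pred_le _) j.2
        have hlt : ((⟨(j : ℕ) - 1, hpf⟩ : Fin s) : ℕ) + 1 < s := by
          show (j : ℕ) - 1 + 1 < s
          have := j.2
          omega
        have h2 := hasc ⟨(j : ℕ) - 1, hpf⟩ hlt
        have heq : (⟨((⟨(j : ℕ) - 1, hpf⟩ : Fin s) : ℕ) + 1, hlt⟩ : Fin s) = j :=
          Fin.ext (by show (j : ℕ) - 1 + 1 = (j : ℕ); omega)
        rwa [heq] at h2
      · rw [dif_neg h0]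
        exact bot_le
    have hext : ∀ j : Fin s, ∃ v : Fin (N j) → (Fin (∑ t, M t) → D),
        (∀ b, v b ∈ RCS (C j)) ∧
        (if h : 0 < (j : ℕ) then
          RCS (C ⟨(j : ℕ) - 1, lt_of_le_of_lt (Nat.pred_le _) j.2⟩) else ⊥)
          ⊔ Submodule.span Dᵐᵒᵖ (Set.range v) = RCS (C j) := by
      intro j
      refine exists_extend' _ _ (hprevle j) (N j) ?_
      rcases Nat.lt_or_ge (j : ℕ) (k : ℕ) with hjk | hjk
      · have hCj : C j = 0 := hk' j hjk
        rw [hCj, RCS_zero']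
        simp
      · have h2 := hrk j hjk
        by_cases h0 : 0 < (j : ℕ)
        · rw [dif_pos h0] at h2 ⊢
          omega
        · rw [dif_neg h0] at h2 ⊢
          rw [finrank_bot]
          omega
    choose v hvW hvspan using hext
    set A : Matrix (Fin (∑ t, M t)) (Fin (∑ t, N t)) D :=
      fun p q => v (blkPair N q).1 (blkPair N q).2 p with hA
    have hAq : ∀ q, Aᵀ q ∈ RCS (C (blkPair N q).1) := fun q => hvW _ _
    have hAnest : IsNest M N A := by
      intro i j2 a b hji
      have h1 : (blkPair N (blockIdx N j2 b)).1 = j2 := blkPair_fst N j2 b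
      have hx := hAq (blockIdx N j2 b)
      rw [h1] at hx
      exact RCS_apply_eq_zero (hblk j2 i hji a) hx
    have hAJ : A ∈ J := by
      rw [hmemJ A]
      intro j2
      refine (exists_factor_iff _ _).2 fun b => ?_
      have hx := hAq (blockIdx N j2 b)
      rw [blkPair_fst N j2 b] at hx
      exact hx
    have hVW : ∀ j2 : Fin s, Vcum N A j2 = RCS (C j2) := by
      suffices H : ∀ d : ℕ, ∀ j2 : Fin s, (j2 : ℕ) = d → Vcum N A j2 = RCS (C j2) by
        intro j2
        exact H (j2 : ℕ) j2 rfl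
      intro d
      induction d using Nat.strong_induction_on with
      | _ d ih =>
        intro j2 hj2
        have hcolT : (blockCol N A j2)ᵀ = v j2 := by
          funext b
          show v (blkPair N (blockIdx N j2 b)).1 (blkPair N (blockIdx N j2 b)).2 = v j2 b
          exact congrArg (fun pr : Σ t : Fin s, Fin (N t) => v pr.1 pr.2)
            (blkPair_blockIdx N j2 b)
        have hcolspan : RCS (blockCol N A j2) = Submodule.span Dᵐᵒᵖ (Set.range (v j2)) := by
          rw [RCS, hcolT]
        rw [Vcum_decomp, hcolspan]
        by_cases h0 : 0 < (j2 : ℕ)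
        · rw [dif_pos h0]
          rw [ih ((j2 : ℕ) - 1) (by omega) ⟨(j2 : ℕ) - 1, lt_of_le_of_lt (Nat.pred_le _) j2.2⟩
            rfl]
          have h3 := hvspan j2
          rwa [dif_pos h0] at h3
        · rw [dif_neg h0]
          have h3 := hvspan j2
          rwa [dif_neg h0] at h3
    refine ⟨A, hAnest, ?_⟩
    rw [hJdef]
    ext B
    simp only [Set.mem_setOf_eq]
    constructor
    · intro hB
      have hBq : ∀ q, Bᵀ q ∈ Vcum N A (blkPair N q).1 := by
        intro q
        rw [hVW]
        obtain ⟨Y, hY⟩ := hB (blkPair N q).1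
        have h2 := col_mul_mem (C (blkPair N q).1) Y (blkPair N q).2
        rw [← hY, blockCol_transpose, blkPair_spec] at h2
        exact h2
      have hBq' : ∀ q, ∃ c : Fin (∑ t, N t) → Dᵐᵒᵖ,
          ∑ p, c p • (if ((blkPair N p).1 : ℕ) ≤ ((blkPair N q).1 : ℕ) then Aᵀ p else 0)
            = Bᵀ q := fun q => (Submodule.mem_span_range_iff_exists_fun Dᵐᵒᵖ).1 (hBq q)
      choose c hc using hBq'
      refine ⟨fun p q =>
        if ((blkPair N p).1 : ℕ) ≤ ((blkPair N q).1 : ℕ) then (c q p).unop else 0, ?_, ?_⟩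
      · intro i j2 a b hji
        have h1 := blkPair_fst N i a
        have h2 := blkPair_fst N j2 b
        beta_reduce
        rw [h1, h2, if_neg (by omega)]
      · ext i q
        have h2 := congrFun (hc q) i
        simp only [Finset.sum_apply, Pi.smul_apply, Matrix.transpose_apply] at h2
        show B i q = ∑ p, A i p * (if ((blkPair N p).1 : ℕ) ≤ ((blkPair N q).1 : ℕ) then (c q p).unop else 0); refine h2.symm.trans ?_
        refine Finset.sum_congr rfl fun p _ => ?_
        by_cases hcnd : ((blkPair N p).1 : ℕ) ≤ ((blkPair N q).1 : ℕ)
        · rw [if_pos hcnd, if_pos hcnd]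
          rfl
        · rw [if_neg hcnd, if_neg hcnd]
          simp
    · rintro ⟨Q, hQnest, rfl⟩
      exact (hmemJ _).1 (hJ A Q hQnest hAJ)
end

section
/- Let D be a division ring, m, n positive integers, and J a nonzero left submodule of the set T_{m×n}(D) of upper triangular m×n matrices (an additive subgroup with T_m(D)·J ⊆ J), with associated unique sequence (R_1,…,R_m) of left row reduced echelon matrices in M_n(D). Let 1 ≤ k ≤ m be the largest index with R_k ≠ 0 and set R_{k+1} := 0 if k = m. Then J is principal (J = T_m(D)·A for some A ∈ T_{m×n}(D)) if and only if rank(R_i) − rank(R_{i+1}) ∈ {0, 1} for every 1 ≤ i ≤ k. -/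
open Matrix Pointwise

section Aux

variable {D : Type*} [DivisionRing D] {m n : ℕ}

lemma aux_span_step (A : Fin m → (Fin n → D)) (i : Fin m) :
    Submodule.span D (A '' {j : Fin m | (i : ℕ) ≤ (j : ℕ)}) =
      Submodule.span D {A i} ⊔
        Submodule.span D (A '' {j : Fin m | (i : ℕ) + 1 ≤ (j : ℕ)}) := by
  have hset : {j : Fin m | (i : ℕ) ≤ (j : ℕ)} =
      insert i {j : Fin m | (i : ℕ) + 1 ≤ (j : ℕ)} := by
    ext j
    simp only [Set.mem_setOf_eq, Set.mem_insert_iff, Fin.ext_iff]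
    omega
  rw [hset, Set.image_insert_eq, Submodule.span_insert]

lemma aux_span_last (A : Fin m → (Fin n → D)) (i : Fin m) (hi : (i : ℕ) + 1 = m) :
    Submodule.span D (A '' {j : Fin m | (i : ℕ) ≤ (j : ℕ)}) =
      Submodule.span D {A i} := by
  have hset : {j : Fin m | (i : ℕ) ≤ (j : ℕ)} = {i} := by
    ext j
    simp only [Set.mem_setOf_eq, Set.mem_singleton_iff, Fin.ext_iff]
    have := j.2
    omega
  rw [hset, Set.image_singleton]

lemma aux_mem_span_image (A : Fin m → (Fin n → D)) (s : Set (Fin m)) (v : Fin n → D) :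
    v ∈ Submodule.span D (A '' s) ↔
      ∃ c : Fin m → D, (∀ j ∉ s, c j = 0) ∧ v = ∑ j, c j • A j := by
  constructor
  · intro hv
    rw [Finsupp.mem_span_image_iff_linearCombination] at hv
    obtain ⟨l, hl, hlv⟩ := hv
    rw [Finsupp.mem_supported] at hl
    refine ⟨l, fun j hj => ?_, ?_⟩
    · by_contra h
      exact hj (hl (Finsupp.mem_support_iff.2 h))
    · rw [← hlv, Finsupp.linearCombination_apply, Finsupp.sum_fintype]
      intro j; exact zero_smul _ _
  · rintro ⟨c, hc, rfl⟩
    refine Submodule.sum_mem _ fun j _ => ?_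
    by_cases hj : j ∈ s
    · exact Submodule.smul_mem _ _ (Submodule.subset_span ⟨j, hj, rfl⟩)
    · rw [hc j hj, zero_smul]; exact Submodule.zero_mem _

lemma aux_finrank_sup_singleton_le (W : Submodule D (Fin n → D)) (v : Fin n → D) :
    Module.finrank D ↥(W ⊔ Submodule.span D {v}) ≤ Module.finrank D ↥W + 1 := by
  have h := Submodule.finrank_sup_add_finrank_inf_eq W (Submodule.span D {v})
  have h1 : Module.finrank D ↥(Submodule.span D ({v} : Set (Fin n → D))) ≤ 1 := by
    by_cases hv : v = 0
    · subst hv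
      rw [Submodule.span_zero_singleton]
      simp
    · rw [finrank_span_singleton hv]
  omega

end Aux

/-- A nonzero left submodule `J` of the upper triangular matrices
`T_{m×n}(D)` with associated sequence `(R_1, …, R_m)` and largest index `k` with
`R_k ≠ 0` is principal (i.e. `J = T_m(D)·A` for some upper triangular `A`) iff
`rank(R_i) − rank(R_{i+1}) ∈ {0, 1}` for every `i ≤ k` (with `R_{k+1} := 0` if `k = m`). -/
theorem leftSubmodule_upperTriangular_principal_iff_rank_cond
    (D : Type*) [DivisionRing D] (m n : ℕ) (hm : 0 < m) (hn : 0 < n)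
    (J : AddSubgroup (Matrix (Fin m) (Fin n) D))
    (hJne : J ≠ ⊥)
    (hJT : ∀ A ∈ J, IsUpperTriangular A)
    (hJ : ∀ (P : Matrix (Fin m) (Fin m) D) (B : Matrix (Fin m) (Fin n) D),
      _root_.IsUpperTriangular P → B ∈ J → P * B ∈ J)
    (R : Fin m → Matrix (Fin n) (Fin n) D)
    (hRE : ∀ i, IsRowReducedEchelon (R i))
    (hdesc : ∀ (i : Fin m) (hi : (i : ℕ) + 1 < m), LRS (R ⟨(i : ℕ) + 1, hi⟩) ≤ LRS (R i))
    (hblk : ∀ (i : Fin m) (p q : Fin n), (q : ℕ) < (i : ℕ) → R i p q = 0)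
    (hJdef : (J : Set (Matrix (Fin m) (Fin n) D)) =
      {A | ∀ i : Fin m, A i ∈ LRS (R i)})
    (k : Fin m) (hk : R k ≠ 0) (hk' : ∀ i : Fin m, (k : ℕ) < (i : ℕ) → R i = 0) :
    (∃ A : Matrix (Fin m) (Fin n) D, IsUpperTriangular A ∧
        (J : Set (Matrix (Fin m) (Fin n) D)) =
          {B | ∃ P : Matrix (Fin m) (Fin m) D, _root_.IsUpperTriangular P ∧ B = P * A}) ↔
      ∀ i : Fin m, (i : ℕ) ≤ (k : ℕ) →
        (Module.finrank D (LRS (R i)) -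
            (if hi : (i : ℕ) + 1 < m then
              Module.finrank D (LRS (R ⟨(i : ℕ) + 1, hi⟩)) else 0) = 0 ∨
         Module.finrank D (LRS (R i)) -
            (if hi : (i : ℕ) + 1 < m then
              Module.finrank D (LRS (R ⟨(i : ℕ) + 1, hi⟩)) else 0) = 1) := by
  classical
  have hmem : ∀ B : Matrix (Fin m) (Fin n) D, B ∈ J ↔ ∀ i : Fin m, B i ∈ LRS (R i) := by
    intro B
    rw [← SetLike.mem_coe, hJdef]
    exact Iff.rfl
  have hrow : ∀ (P : Matrix (Fin m) (Fin m) D) (B : Matrix (Fin m) (Fin n) D) (i : Fin m),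
      (P * B) i = ∑ j, P i j • B j := by
    intro P B i
    funext q
    simp [Matrix.mul_apply, Finset.sum_apply]
  have hchain : ∀ d : ℕ, ∀ i j : Fin m, (j : ℕ) = (i : ℕ) + d → LRS (R j) ≤ LRS (R i) := by
    intro d
    induction d with
    | zero =>
      intro i j hij
      have : j = i := Fin.ext (by omega)
      rw [this]
    | succ d ih =>
      intro i j hij
      have hj2 := j.2
      have hi2 : (i : ℕ) + d + 1 < m := by omega
      have h2 := hdesc ⟨(i : ℕ) + d, by omega⟩ hi2
      have hjeq : j = ⟨(i : ℕ) + d + 1, hi2⟩ := Fin.ext (by simp; omega)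
      rw [hjeq]
      exact h2.trans (ih i ⟨(i : ℕ) + d, by omega⟩ rfl)
  have hchain' : ∀ i j : Fin m, (i : ℕ) ≤ (j : ℕ) → LRS (R j) ≤ LRS (R i) :=
    fun i j h => hchain ((j : ℕ) - (i : ℕ)) i j (by omega)
  constructor
  · -- principal → rank condition
    rintro ⟨A, hAut, hJA⟩
    have hS : ∀ i : Fin m, LRS (R i) =
        Submodule.span D ((fun j => A j) '' {j : Fin m | (i : ℕ) ≤ (j : ℕ)}) := by
      intro i
      apply le_antisymm
      · rw [LRS, Submodule.span_le]
        rintro v ⟨p, rfl⟩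
        set B : Matrix (Fin m) (Fin n) D := fun p' q => if p' = i then R i p q else 0 with hBdef
        have hBJ : B ∈ J := by
          rw [hmem]
          intro i'
          by_cases h : i' = i
          · subst h
            have hB : B i' = R i' p := by funext q; simp [hBdef]
            rw [hB]
            exact Submodule.subset_span ⟨p, rfl⟩
          · have hB : B i' = 0 := by funext q; simp [hBdef, h]
            rw [hB]
            exact Submodule.zero_mem _
        have hBmem : B ∈ (J : Set (Matrix (Fin m) (Fin n) D)) := hBJ
        rw [hJA] at hBmem
        obtain ⟨P, hPut, hBP⟩ := hBmem
        have hv : R i p = ∑ j, P i j • A j := by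
          have h1 : B i = R i p := by funext q; simp [hBdef]
          rw [← h1, hBP, hrow]
        have : R i p ∈ Submodule.span D
            ((fun j => A j) '' {j : Fin m | (i : ℕ) ≤ (j : ℕ)}) := by
          rw [aux_mem_span_image]
          refine ⟨fun j => P i j, fun j hj => ?_, hv⟩
          simp only [Set.mem_setOf_eq] at hj
          exact hPut i j (by omega)
        exact this
      · rw [Submodule.span_le]
        rintro w ⟨j, hj, rfl⟩
        have hj' : (i : ℕ) ≤ (j : ℕ) := hj
        set P : Matrix (Fin m) (Fin m) D := fun p q => if p = i ∧ q = j then 1 else 0 with hPdef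
        have hPut : _root_.IsUpperTriangular P := by
          intro p q hqp
          simp only [hPdef]
          rw [if_neg]
          rintro ⟨rfl, rfl⟩
          omega
        have hPJ : P * A ∈ (J : Set (Matrix (Fin m) (Fin n) D)) := by
          rw [hJA]; exact ⟨P, hPut, rfl⟩
        have h2 := (hmem _).1 hPJ i
        have h3 : (P * A) i = A j := by
          funext q
          rw [Matrix.mul_apply]
          simp [hPdef, ite_mul]
        show A j ∈ (LRS (R i) : Set (Fin n → D))
        exact h3 ▸ h2
    intro i hik
    by_cases hi : (i : ℕ) + 1 < m
    · rw [dif_pos hi]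
      have h2 : Submodule.span D ((fun j => A j) '' {j : Fin m | (i : ℕ) + 1 ≤ (j : ℕ)}) =
          LRS (R ⟨(i : ℕ) + 1, hi⟩) := (hS ⟨(i : ℕ) + 1, hi⟩).symm
      have hstep : LRS (R i) = Submodule.span D {A i} ⊔ LRS (R ⟨(i : ℕ) + 1, hi⟩) := by
        rw [hS i, aux_span_step, h2]
      have hb := aux_finrank_sup_singleton_le (LRS (R ⟨(i : ℕ) + 1, hi⟩)) (A i)
      have hle : Module.finrank D ↥(LRS (R i)) ≤
          Module.finrank D ↥(LRS (R ⟨(i : ℕ) + 1, hi⟩)) + 1 := by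
        rw [hstep, sup_comm]
        exact hb
      omega
    · rw [dif_neg hi]
      have hlast : (i : ℕ) + 1 = m := by have := i.2; omega
      have h2 : LRS (R i) = Submodule.span D {A i} := by
        rw [hS i, aux_span_last (fun j => A j) i hlast]
      have hle : Module.finrank D ↥(LRS (R i)) ≤ 1 := by
        rw [h2]
        by_cases hA0 : A i = 0
        · rw [hA0, Submodule.span_zero_singleton]
          simp
        · rw [finrank_span_singleton hA0]
      omega
  · -- rank condition → principal
    intro hcond
    have hNle : ∀ i : Fin m,
        (if hi : (i : ℕ) + 1 < m then LRS (R ⟨(i : ℕ) + 1, hi⟩) else ⊥) ≤ LRS (R i) := by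
      intro i
      split_ifs with hi
      · exact hdesc i hi
      · exact bot_le
    have hex : ∀ i : Fin m, ∃ v : Fin n → D, v ∈ LRS (R i) ∧
        (if hi : (i : ℕ) + 1 < m then LRS (R ⟨(i : ℕ) + 1, hi⟩) else ⊥) ⊔
          Submodule.span D {v} = LRS (R i) := by
      intro i
      set N := (if hi : (i : ℕ) + 1 < m then LRS (R ⟨(i : ℕ) + 1, hi⟩) else ⊥) with hN
      by_cases heq : Module.finrank D ↥N = Module.finrank D ↥(LRS (R i))
      · refine ⟨0, Submodule.zero_mem _, ?_⟩
        rw [Submodule.span_zero_singleton, sup_bot_eq]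
        exact Submodule.eq_of_le_of_finrank_eq (hNle i) heq
      · have hlt : N < LRS (R i) := lt_of_le_of_ne (hNle i) (fun h => heq (by rw [h]))
        obtain ⟨v, hvM, hvN⟩ := SetLike.exists_of_lt hlt
        have hik : (i : ℕ) ≤ (k : ℕ) := by
          by_contra hlt'
          have hzero : R i = 0 := hk' i (by omega)
          have hLbot : LRS (R i) = ⊥ := by
            rw [LRS, hzero]
            have hr : Set.range (0 : Matrix (Fin n) (Fin n) D) = {0} := by
              ext u
              constructor
              · rintro ⟨p, rfl⟩; rfl
              · rintro rfl; exact ⟨⟨0, hn⟩, rfl⟩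
            rw [hr, Submodule.span_zero_singleton]
          have hNbot : N = ⊥ := le_bot_iff.1 (hLbot ▸ hNle i)
          rw [hNbot, hLbot] at heq
          exact heq rfl
        have hr : Module.finrank D ↥(LRS (R i)) ≤ Module.finrank D ↥N + 1 := by
          have h := hcond i hik
          by_cases hi : (i : ℕ) + 1 < m
          · rw [dif_pos hi] at h
            have hN' : N = LRS (R ⟨(i : ℕ) + 1, hi⟩) := by rw [hN, dif_pos hi]
            rw [hN']
            omega
          · rw [dif_neg hi] at h
            have hN' : N = ⊥ := by rw [hN, dif_neg hi]
            rw [hN', finrank_bot]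
            omega
        refine ⟨v, hvM, ?_⟩
        have hsub : N ⊔ Submodule.span D {v} ≤ LRS (R i) :=
          sup_le (hNle i) ((Submodule.span_singleton_le_iff_mem v _).2 hvM)
        have hvsup : v ∈ N ⊔ Submodule.span D {v} :=
          Submodule.mem_sup_right (Submodule.mem_span_singleton_self v)
        have hlt2 : N < N ⊔ Submodule.span D {v} :=
          lt_of_le_of_ne le_sup_left (fun h => hvN (by rw [h]; exact hvsup))
        have h1 : Module.finrank D ↥N < Module.finrank D ↥(N ⊔ Submodule.span D {v}) :=
          Submodule.finrank_lt_finrank_of_lt hlt2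
        have h2 : Module.finrank D ↥(N ⊔ Submodule.span D {v}) ≤
            Module.finrank D ↥(LRS (R i)) := Submodule.finrank_mono hsub
        exact Submodule.eq_of_le_of_finrank_eq hsub (by omega)
    choose Arow hA1 hA2 using hex
    have key : ∀ d : ℕ, ∀ i : Fin m, m - (i : ℕ) ≤ d →
        Submodule.span D (Arow '' {j : Fin m | (i : ℕ) ≤ (j : ℕ)}) = LRS (R i) := by
      intro d
      induction d with
      | zero => intro i hi; exact absurd hi (by have := i.2; omega)
      | succ d ih =>
        intro i hi
        by_cases hlast : (i : ℕ) + 1 < m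
        · have ih' : Submodule.span D (Arow '' {j : Fin m | (i : ℕ) + 1 ≤ (j : ℕ)}) =
              LRS (R ⟨(i : ℕ) + 1, hlast⟩) :=
            ih ⟨(i : ℕ) + 1, hlast⟩ (show m - ((i : ℕ) + 1) ≤ d by omega)
          rw [aux_span_step, ih']
          have hA2i := hA2 i
          rw [dif_pos hlast] at hA2i
          rw [sup_comm]
          exact hA2i
        · have hlast' : (i : ℕ) + 1 = m := by have := i.2; omega
          rw [aux_span_last Arow i hlast']
          have hA2i := hA2 i
          rw [dif_neg hlast, bot_sup_eq] at hA2i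
          exact hA2i
    have hSpan : ∀ i : Fin m,
        Submodule.span D (Arow '' {j : Fin m | (i : ℕ) ≤ (j : ℕ)}) = LRS (R i) :=
      fun i => key m i (by omega)
    refine ⟨Matrix.of Arow, ?_, ?_⟩
    · intro i j hji
      have hker : LRS (R i) ≤ LinearMap.ker (LinearMap.proj j : (Fin n → D) →ₗ[D] D) := by
        rw [LRS, Submodule.span_le]
        rintro v ⟨p, rfl⟩
        simpa [LinearMap.mem_ker] using hblk i p j hji
      have := hker (hA1 i)
      simpa using this
    · ext B
      simp only [SetLike.mem_coe, Set.mem_setOf_eq]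
      constructor
      · intro hB
        have hBrows := (hmem B).1 hB
        have hrep : ∀ i : Fin m, ∃ c : Fin m → D,
            (∀ j : Fin m, (j : ℕ) < (i : ℕ) → c j = 0) ∧ B i = ∑ j, c j • Arow j := by
          intro i
          have hmem2 := hBrows i
          rw [← hSpan i, aux_mem_span_image] at hmem2
          obtain ⟨c, hc0, hcs⟩ := hmem2
          exact ⟨c, fun j hj => hc0 j (by simp only [Set.mem_setOf_eq]; omega), hcs⟩
        choose P hP0 hPB using hrep
        refine ⟨Matrix.of P, fun p q h => hP0 p q h, ?_⟩
        funext i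
        rw [hrow (Matrix.of P) (Matrix.of Arow) i]
        exact hPB i
      · rintro ⟨P, hPut, rfl⟩
        rw [hmem]
        intro i
        rw [hrow]
        apply Submodule.sum_mem
        intro j _
        by_cases hij : (i : ℕ) ≤ (j : ℕ)
        · exact Submodule.smul_mem _ _ (hchain' i j hij (hA1 j))
        · rw [hPut i j (by omega), zero_smul]
          exact Submodule.zero_mem _
end

section
/- Let D be a division ring, M = (m_1,…,m_r), N = (n_1,…,n_s) partitions of m and n, and J a nonzero subbimodule of T_{(M,N)}(D), i.e., an additive subgroup with T_M·J ⊆ J and J·T_N ⊆ J. Then there exist a unique integer 1 ≤ i ≤ min(r,s) and a unique nondecreasing sequence (j_1,…,j_i) with k ≤ j_k ≤ s for each 1 ≤ k ≤ i, such that J = {A ∈ M_{m×n}(D) : A_{kl} = 0 whenever k > i, and A_{kl} = 0 whenever k ≤ i and l < j_k}. Moreover, every subbimodule of T_{(M,N)}(D) is principal: there exists A ∈ J such that J is the smallest subbimodule of T_{(M,N)}(D) containing A. -/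
open Matrix Pointwise

lemma blockStart_add_le {r : ℕ} (M : Fin r → ℕ) {k k' : Fin r} (h : (k : ℕ) < (k' : ℕ)) :
    blockStart M k + M k ≤ blockStart M k' := by
  have hsub : insert k (Finset.Iio k) ⊆ Finset.Iio k' := by
    intro t ht
    simp only [Finset.mem_insert, Finset.mem_Iio, Fin.lt_def] at *
    rcases ht with h1 | h1
    · subst h1; omega
    · omega
  calc blockStart M k + M k = ∑ t ∈ insert k (Finset.Iio k), M t := by
        rw [Finset.sum_insert (by simp), blockStart, add_comm]
    _ ≤ _ := Finset.sum_le_sum_of_subset hsub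

lemma blockIdx_inj {r : ℕ} (M : Fin r → ℕ) {k k' : Fin r} {a : Fin (M k)} {a' : Fin (M k')}
    (h : blockIdx M k a = blockIdx M k' a') : k = k' ∧ (a : ℕ) = (a' : ℕ) := by
  have hv : blockStart M k + (a : ℕ) = blockStart M k' + (a' : ℕ) := congrArg Fin.val h
  have hkk : k = k' := by
    by_contra hne
    have hvne : (k : ℕ) ≠ (k' : ℕ) := fun hc => hne (Fin.ext hc)
    rcases Nat.lt_or_ge (k : ℕ) (k' : ℕ) with hlt | hge
    · have := blockStart_add_le M hlt
      have := a.2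
      omega
    · have hlt : (k' : ℕ) < (k : ℕ) := by omega
      have := blockStart_add_le M hlt
      have := a'.2
      omega
  subst hkk
  exact ⟨rfl, by omega⟩

lemma exists_blockIdx {r : ℕ} (M : Fin r → ℕ) (p : Fin (∑ t, M t)) :
    ∃ (k : Fin r) (a : Fin (M k)), p = blockIdx M k a := by
  have hr : 0 < r := by
    by_contra h
    push_neg at h
    interval_cases r
    have := p.2
    simp at this
  classical
  set T : Finset (Fin r) := Finset.univ.filter (fun k => blockStart M k ≤ (p : ℕ)) with hT
  have hTne : T.Nonempty := by
    refine ⟨⟨0, hr⟩, ?_⟩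
    have he : Finset.Iio (⟨0, hr⟩ : Fin r) = ∅ := by
      ext t; simp [Fin.lt_def]
    rw [hT, Finset.mem_filter]
    exact ⟨Finset.mem_univ _, by simp [blockStart, he]⟩
  set k := T.max' hTne with hk
  have hk1 : blockStart M k ≤ (p : ℕ) := by
    have := T.max'_mem hTne
    simp [hT] at this
    exact this
  have hk2 : (p : ℕ) < blockStart M k + M k := by
    by_contra h
    push_neg at h
    rcases Nat.lt_or_ge ((k : ℕ) + 1) r with hlt | hge
    · set k' : Fin r := ⟨(k : ℕ) + 1, hlt⟩ with hk'
      have heq : blockStart M k' = blockStart M k + M k := by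
        rw [blockStart, blockStart]
        have : Finset.Iio k' = insert k (Finset.Iio k) := by
          ext t
          simp [Fin.lt_def, hk']
        rw [this, Finset.sum_insert (by simp), add_comm]
      have hmem : k' ∈ T := by
        simp [hT]
        omega
      have := T.le_max' k' hmem
      rw [← hk] at this
      have : (k' : ℕ) ≤ (k : ℕ) := this
      simp [hk'] at this
    · have heq : ∑ t, M t = blockStart M k + M k := by
        rw [blockStart]
        have : (Finset.univ : Finset (Fin r)) = insert k (Finset.Iio k) := by
          ext t
          simp [Fin.lt_def]
          have := t.2
          have := k.2
          omega
        rw [this, Finset.sum_insert (by simp), add_comm]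
      have := p.2
      omega
  refine ⟨k, ⟨(p : ℕ) - blockStart M k, by omega⟩, ?_⟩
  apply Fin.ext
  simp [blockIdx]
  omega

section Std
variable {D : Type*} [DivisionRing D]

lemma my_std_mul_std {α β γ : Type*} [DecidableEq α] [DecidableEq β] [DecidableEq γ]
    [Fintype β] (p : α) (q : β) (d : D) (u : β) (v : γ) (c : D) :
    Matrix.single p q d * Matrix.single u v c =
      if q = u then Matrix.single p v (d * c) else 0 := by
  ext i j
  simp [Matrix.mul_apply, Matrix.single, ite_and]
  by_cases h1 : i = p <;> by_cases h2 : q = u <;> by_cases h3 : j = v <;>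
    simp [h1, h2, h3, Finset.sum_ite_eq]
  all_goals simp_all [eq_comm]

lemma my_std_mul_A_mul_std {α β γ δ : Type*} [DecidableEq α] [DecidableEq β] [DecidableEq γ]
    [DecidableEq δ] [Fintype β] [Fintype γ] (p : α) (q : β) (d : D)
    (A : Matrix β γ D) (u : γ) (v : δ) (c : D) :
    Matrix.single p q d * A * Matrix.single u v c =
      Matrix.single p v (d * A q u * c) := by
  ext i j
  by_cases h1 : i = p <;> by_cases h2 : j = v <;>
    simp [Matrix.mul_apply, Matrix.single, ite_and, h1, h2, Finset.sum_ite_eq,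
      Finset.mul_sum, mul_assoc]
  split_ifs <;> simp

lemma isNest_std {r s : ℕ} (M : Fin r → ℕ) (N : Fin s → ℕ)
    (k : Fin r) (l : Fin s) (a : Fin (M k)) (b : Fin (N l)) (d : D)
    (h : (k : ℕ) ≤ (l : ℕ)) :
    IsNest M N (Matrix.single (blockIdx M k a) (blockIdx N l b) d) := by
  intro i j a' b' hji
  apply Matrix.single_apply_of_ne
  rintro ⟨h1, h2⟩
  have hk := (blockIdx_inj M h1).1
  have hl := (blockIdx_inj N h2).1
  subst hk; subst hl
  omega

lemma std_mem_of_entry_ne {r s : ℕ} {M : Fin r → ℕ} {N : Fin s → ℕ}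
    {J : AddSubgroup (Matrix (Fin (∑ t, M t)) (Fin (∑ t, N t)) D)}
    (hJl : ∀ (P : Matrix (Fin (∑ t, M t)) (Fin (∑ t, M t)) D)
      (A : Matrix (Fin (∑ t, M t)) (Fin (∑ t, N t)) D),
      IsNest M M P → A ∈ J → P * A ∈ J)
    (hJr : ∀ (A : Matrix (Fin (∑ t, M t)) (Fin (∑ t, N t)) D)
      (Q : Matrix (Fin (∑ t, N t)) (Fin (∑ t, N t)) D),
      IsNest N N Q → A ∈ J → A * Q ∈ J)
    {k : Fin r} {l : Fin s} {a : Fin (M k)} {b : Fin (N l)}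
    {A : Matrix (Fin (∑ t, M t)) (Fin (∑ t, N t)) D}
    (hA : A ∈ J) (hd : A (blockIdx M k a) (blockIdx N l b) ≠ 0)
    {k' : Fin r} {l' : Fin s} (hk : (k' : ℕ) ≤ (k : ℕ)) (hl : (l : ℕ) ≤ (l' : ℕ))
    (a' : Fin (M k')) (b' : Fin (N l')) (c : D) :
    Matrix.single (blockIdx M k' a') (blockIdx N l' b') c ∈ J := by
  set d := A (blockIdx M k a) (blockIdx N l b) with hdd
  have h1 : Matrix.single (blockIdx M k' a') (blockIdx M k a) (1 : D) * A ∈ J :=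
    hJl _ _ (isNest_std M M k' k a' a 1 hk) hA
  have h2 : Matrix.single (blockIdx M k' a') (blockIdx M k a) (1 : D) * A *
      Matrix.single (blockIdx N l b) (blockIdx N l' b') (d⁻¹ * c) ∈ J :=
    hJr _ _ (isNest_std N N l l' b b' _ hl) h1
  have h3 : Matrix.single (blockIdx M k' a') (blockIdx M k a) (1 : D) * A *
      Matrix.single (blockIdx N l b) (blockIdx N l' b') (d⁻¹ * c) =
      Matrix.single (blockIdx M k' a') (blockIdx N l' b') c := by
    rw [my_std_mul_A_mul_std, ← hdd, one_mul, ← mul_assoc, mul_inv_cancel₀ hd, one_mul]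
  rwa [h3] at h2

end Std

lemma mem_setE_iff {D : Type*} [DivisionRing D] {r s : ℕ} (M : Fin r → ℕ) (N : Fin s → ℕ)
    (hM : ∀ i, 0 < M i) (hN : ∀ j, 0 < N j) (i₀ : ℕ) (j₀ : Fin i₀ → Fin s)
    (k : Fin r) (l : Fin s) :
    (Matrix.single (blockIdx M k ⟨0, hM k⟩) (blockIdx N l ⟨0, hN l⟩) (1 : D) ∈
      {A : Matrix (Fin (∑ t, M t)) (Fin (∑ t, N t)) D |
        ∀ (k : Fin r) (l : Fin s) (a : Fin (M k)) (b : Fin (N l)),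
          (i₀ ≤ (k : ℕ) ∨ ∃ hk : (k : ℕ) < i₀, (l : ℕ) < (j₀ ⟨(k : ℕ), hk⟩ : ℕ)) →
          A (blockIdx M k a) (blockIdx N l b) = 0}) ↔
    ¬(i₀ ≤ (k : ℕ) ∨ ∃ hk : (k : ℕ) < i₀, (l : ℕ) < (j₀ ⟨(k : ℕ), hk⟩ : ℕ)) := by
  constructor
  · intro h hcond
    have := h k l ⟨0, hM k⟩ ⟨0, hN l⟩ hcond
    rw [Matrix.single_apply_same] at this
    exact one_ne_zero this
  · intro hncond k' l' a b hcond
    apply Matrix.single_apply_of_ne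
    rintro ⟨h1, h2⟩
    have hk := (blockIdx_inj M h1).1
    have hl := (blockIdx_inj N h2).1
    subst hk; subst hl
    exact hncond hcond

/-- A nonzero subbimodule `J` of the nest module `T_{(M,N)}(D)` is
determined by a unique integer `1 ≤ i ≤ min(r,s)` together with a unique nondecreasing
sequence `(j_1, …, j_i)` with `k ≤ j_k ≤ s` (here encoded 0-based: `p.1 = i` and
`p.2 : Fin i → Fin s` with `k ≤ p.2 k`), via
`J = {A : A_{kl} = 0 whenever k > i, or k ≤ i and l < j_k}`. Moreover `J` is principal:
it is the smallest subbimodule of `T_{(M,N)}(D)` containing some element `A` of it. -/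
theorem subbimodule_nest_classification
    (D : Type*) [DivisionRing D] (r s : ℕ) (M : Fin r → ℕ) (N : Fin s → ℕ)
    (hM : ∀ i, 0 < M i) (hN : ∀ j, 0 < N j)
    (J : AddSubgroup (Matrix (Fin (∑ t, M t)) (Fin (∑ t, N t)) D))
    (hJne : J ≠ ⊥)
    (hJT : ∀ A ∈ J, IsNest M N A)
    (hJl : ∀ (P : Matrix (Fin (∑ t, M t)) (Fin (∑ t, M t)) D)
      (A : Matrix (Fin (∑ t, M t)) (Fin (∑ t, N t)) D),
      IsNest M M P → A ∈ J → P * A ∈ J)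
    (hJr : ∀ (A : Matrix (Fin (∑ t, M t)) (Fin (∑ t, N t)) D)
      (Q : Matrix (Fin (∑ t, N t)) (Fin (∑ t, N t)) D),
      IsNest N N Q → A ∈ J → A * Q ∈ J) :
    (∃! p : (i : ℕ) × (Fin i → Fin s),
      1 ≤ p.1 ∧ p.1 ≤ min r s ∧ Monotone p.2 ∧
      (∀ k : Fin p.1, (k : ℕ) ≤ (p.2 k : ℕ)) ∧
      (J : Set (Matrix (Fin (∑ t, M t)) (Fin (∑ t, N t)) D)) =
        {A | ∀ (k : Fin r) (l : Fin s) (a : Fin (M k)) (b : Fin (N l)),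
          (p.1 ≤ (k : ℕ) ∨ ∃ hk : (k : ℕ) < p.1, (l : ℕ) < (p.2 ⟨(k : ℕ), hk⟩ : ℕ)) →
          A (blockIdx M k a) (blockIdx N l b) = 0}) ∧
    (∃ A ∈ J, ∀ K : AddSubgroup (Matrix (Fin (∑ t, M t)) (Fin (∑ t, N t)) D),
      (∀ B ∈ K, IsNest M N B) →
      (∀ (P : Matrix (Fin (∑ t, M t)) (Fin (∑ t, M t)) D)
        (B : Matrix (Fin (∑ t, M t)) (Fin (∑ t, N t)) D),
        IsNest M M P → B ∈ K → P * B ∈ K) →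
      (∀ (B : Matrix (Fin (∑ t, M t)) (Fin (∑ t, N t)) D)
        (Q : Matrix (Fin (∑ t, N t)) (Fin (∑ t, N t)) D),
        IsNest N N Q → B ∈ K → B * Q ∈ K) →
      A ∈ K → J ≤ K) := by
  classical
  obtain ⟨A₀, hA₀J, hA₀ne⟩ : ∃ A ∈ J, A ≠ 0 := by
    by_contra h
    push_neg at h
    exact hJne ((AddSubgroup.eq_bot_iff_forall J).mpr h)
  obtain ⟨p₀, q₀, hpq⟩ : ∃ p q, A₀ p q ≠ 0 := by
    by_contra h
    push_neg at h
    exact hA₀ne (by ext p q; exact h p q)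
  obtain ⟨k₀, a₀, rfl⟩ := exists_blockIdx M p₀
  obtain ⟨l₀, b₀, rfl⟩ := exists_blockIdx N q₀
  set hit : Fin r → Fin s → Prop :=
    fun k l => ∃ A ∈ J, ∃ (a : Fin (M k)) (b : Fin (N l)),
      A (blockIdx M k a) (blockIdx N l b) ≠ 0 with hhit
  have hstd : ∀ {k : Fin r} {l : Fin s}, hit k l → ∀ {k' : Fin r} {l' : Fin s},
      (k' : ℕ) ≤ (k : ℕ) → (l : ℕ) ≤ (l' : ℕ) →
      ∀ (a' : Fin (M k')) (b' : Fin (N l')) (c : D),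
      Matrix.single (blockIdx M k' a') (blockIdx N l' b') c ∈ J := by
    rintro k l ⟨A, hA, a, b, hd⟩ k' l' hk hl a' b' c
    exact std_mem_of_entry_ne hJl hJr hA hd hk hl a' b' c
  have hit_mono : ∀ {k : Fin r} {l : Fin s} {k' : Fin r} {l' : Fin s},
      hit k l → (k' : ℕ) ≤ (k : ℕ) → (l : ℕ) ≤ (l' : ℕ) → hit k' l' := by
    intro k l k' l' h hk hl
    refine ⟨_, hstd h hk hl ⟨0, hM k'⟩ ⟨0, hN l'⟩ 1, ⟨0, hM k'⟩, ⟨0, hN l'⟩, ?_⟩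
    rw [Matrix.single_apply_same]
    exact one_ne_zero
  have hit_le : ∀ {k : Fin r} {l : Fin s}, hit k l → (k : ℕ) ≤ (l : ℕ) := by
    rintro k l ⟨A, hA, a, b, hd⟩
    by_contra h
    push_neg at h
    exact hd (hJT A hA k l a b h)
  have hit0 : hit k₀ l₀ := ⟨A₀, hA₀J, a₀, b₀, hpq⟩
  set H : Finset (Fin r) := Finset.univ.filter (fun k => ∃ l, hit k l) with hH
  have hHne : H.Nonempty := by
    refine ⟨k₀, ?_⟩
    simp only [hH, Finset.mem_filter, Finset.mem_univ, true_and]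
    exact ⟨l₀, hit0⟩
  set kmax := H.max' hHne with hkmax
  obtain ⟨lmax, hlmax⟩ : ∃ l, hit kmax l := by
    have := H.max'_mem hHne
    simp only [hH, Finset.mem_filter, Finset.mem_univ, true_and] at this
    exact this
  set i : ℕ := (kmax : ℕ) + 1 with hi
  have hi1 : 1 ≤ i := by omega
  have hir : i ≤ r := by have := kmax.2; omega
  have his : i ≤ s := by have := hit_le hlmax; have := lmax.2; omega
  have hrow : ∀ k : Fin r, (k : ℕ) < i → ∃ l, hit k l := by
    intro k hk
    exact ⟨lmax, hit_mono hlmax (by omega) (le_refl _)⟩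
  have hLne : ∀ k : Fin r, (Finset.univ.filter (fun l => hit k l)).Nonempty ∨ True := fun _ => Or.inr trivial
  have hLne' : ∀ (k : Fin r), (k : ℕ) < i →
      (Finset.univ.filter (fun l => hit k l)).Nonempty := by
    intro k hk
    obtain ⟨l, hl⟩ := hrow k hk
    exact ⟨l, by simp only [Finset.mem_filter, Finset.mem_univ, true_and]; exact hl⟩
  set jfun : Fin i → Fin s := fun k =>
    (Finset.univ.filter (fun l => hit ⟨(k : ℕ), lt_of_lt_of_le k.2 hir⟩ l)).min'
      (hLne' _ k.2) with hjfun
  have hji : ∀ k : Fin i, hit ⟨(k : ℕ), lt_of_lt_of_le k.2 hir⟩ (jfun k) := by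
    intro k
    have := Finset.min'_mem _ (hLne' (⟨(k : ℕ), lt_of_lt_of_le k.2 hir⟩ : Fin r) k.2)
    simpa only [Finset.mem_filter, Finset.mem_univ, true_and] using this
  have hjmin : ∀ (k : Fin i) (l : Fin s),
      hit ⟨(k : ℕ), lt_of_lt_of_le k.2 hir⟩ l → jfun k ≤ l := by
    intro k l hl
    exact Finset.min'_le _ _ (by simp only [Finset.mem_filter, Finset.mem_univ, true_and]; exact hl)
  have hmono : Monotone jfun := by
    intro k k' hkk
    apply hjmin
    exact hit_mono (hji k') (Fin.le_def.mp hkk) (le_refl _)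
  have hkj : ∀ k : Fin i, (k : ℕ) ≤ (jfun k : ℕ) := fun k => hit_le (hji k)
  have hJE : (J : Set (Matrix (Fin (∑ t, M t)) (Fin (∑ t, N t)) D)) =
      {A | ∀ (k : Fin r) (l : Fin s) (a : Fin (M k)) (b : Fin (N l)),
        (i ≤ (k : ℕ) ∨ ∃ hk : (k : ℕ) < i, (l : ℕ) < (jfun ⟨(k : ℕ), hk⟩ : ℕ)) →
        A (blockIdx M k a) (blockIdx N l b) = 0} := by
    ext A
    constructor
    · intro hA k l a b hcond
      by_contra hne
      have hhitkl : hit k l := ⟨A, hA, a, b, hne⟩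
      have hkH : k ∈ H := by
        simp only [hH, Finset.mem_filter, Finset.mem_univ, true_and]; exact ⟨l, hhitkl⟩
      have hkle : (k : ℕ) ≤ (kmax : ℕ) := Fin.le_def.mp (H.le_max' k hkH)
      rcases hcond with h | ⟨hk, hl⟩
      · omega
      · have heq : (⟨((⟨(k : ℕ), hk⟩ : Fin i) : ℕ), lt_of_lt_of_le (⟨(k : ℕ), hk⟩ : Fin i).2 hir⟩ : Fin r) = k :=
          Fin.ext rfl
        have := hjmin ⟨(k : ℕ), hk⟩ l (by rw [heq]; exact hhitkl)
        have := Fin.le_def.mp this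
        omega
    · intro hA
      have hrep := Matrix.matrix_eq_sum_single A
      rw [show (A ∈ (J : Set (Matrix (Fin (∑ t, M t)) (Fin (∑ t, N t)) D))) = (A ∈ J) from rfl]
      rw [hrep]
      apply AddSubgroup.sum_mem
      intro p _
      apply AddSubgroup.sum_mem
      intro q _
      obtain ⟨k, a, rfl⟩ := exists_blockIdx M p
      obtain ⟨l, b, rfl⟩ := exists_blockIdx N q
      by_cases hcond : (i ≤ (k : ℕ) ∨ ∃ hk : (k : ℕ) < i, (l : ℕ) < (jfun ⟨(k : ℕ), hk⟩ : ℕ))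
      · rw [hA k l a b hcond, Matrix.single_zero]
        exact zero_mem J
      · push_neg at hcond
        obtain ⟨hk, hl⟩ := hcond
        exact hstd (hji ⟨(k : ℕ), hk⟩) (le_refl _) (Fin.le_def.mp (hl hk)) a b _
  constructor
  · refine ⟨⟨i, jfun⟩, ⟨hi1, le_min hir his, hmono, hkj, hJE⟩, ?_⟩
    rintro ⟨i', j'⟩ hp
    dsimp only at hp
    obtain ⟨h1', h2', hmono', hkj', hset'⟩ := hp
    have hEE : ∀ (k : Fin r) (l : Fin s),
        ¬(i' ≤ (k : ℕ) ∨ ∃ hk : (k : ℕ) < i', (l : ℕ) < (j' ⟨(k : ℕ), hk⟩ : ℕ)) ↔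
        ¬(i ≤ (k : ℕ) ∨ ∃ hk : (k : ℕ) < i, (l : ℕ) < (jfun ⟨(k : ℕ), hk⟩ : ℕ)) := by
      intro k l
      rw [← mem_setE_iff (D := D) M N hM hN i' j' k l, ← mem_setE_iff (D := D) M N hM hN i jfun k l,
        ← hset', ← hJE]
    have hii : i' = i := by
      by_contra hne
      rcases Nat.lt_or_ge i' i with hlt | hge
      · have hk : i - 1 < r := by omega
        have hki : i - 1 < i := by omega
        have hn : ¬(i ≤ ((⟨i - 1, hk⟩ : Fin r) : ℕ) ∨
            ∃ hkk : ((⟨i - 1, hk⟩ : Fin r) : ℕ) < i,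
              ((jfun ⟨i - 1, hki⟩ : Fin s) : ℕ) < (jfun ⟨((⟨i - 1, hk⟩ : Fin r) : ℕ), hkk⟩ : ℕ)) := by
          rintro (h | ⟨hkk, hlt2⟩)
          · have h2 : i ≤ i - 1 := h
            omega
          · exact lt_irrefl _ hlt2
        have hx := (hEE ⟨i - 1, hk⟩ (jfun ⟨i - 1, hki⟩)).mpr hn
        have hy : ¬(i' ≤ i - 1) := fun h => hx (Or.inl h)
        omega
      · have hlt : i < i' := by omega
        have hk : i' - 1 < r := by
          have := le_min_iff.mp h2'
          omega
        have hki : i' - 1 < i' := by omega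
        have hn : ¬(i' ≤ ((⟨i' - 1, hk⟩ : Fin r) : ℕ) ∨
            ∃ hkk : ((⟨i' - 1, hk⟩ : Fin r) : ℕ) < i',
              ((j' ⟨i' - 1, hki⟩ : Fin s) : ℕ) < (j' ⟨((⟨i' - 1, hk⟩ : Fin r) : ℕ), hkk⟩ : ℕ)) := by
          rintro (h | ⟨hkk, hlt2⟩)
          · have h2 : i' ≤ i' - 1 := h
            omega
          · exact lt_irrefl _ hlt2
        have hx := (hEE ⟨i' - 1, hk⟩ (j' ⟨i' - 1, hki⟩)).mp hn
        have hy : ¬(i ≤ i' - 1) := fun h => hx (Or.inl h)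
        omega
    subst hii
    have hjj : j' = jfun := by
      funext k
      have hkr : (k : ℕ) < r := lt_of_lt_of_le k.2 hir
      have h1 : (jfun k : ℕ) ≤ (j' k : ℕ) := by
        have hn : ¬(i ≤ ((⟨(k : ℕ), hkr⟩ : Fin r) : ℕ) ∨
            ∃ hkk : ((⟨(k : ℕ), hkr⟩ : Fin r) : ℕ) < i,
              ((j' k : Fin s) : ℕ) < (j' ⟨((⟨(k : ℕ), hkr⟩ : Fin r) : ℕ), hkk⟩ : ℕ)) := by
          rintro (h | ⟨hkk, hlt2⟩)
          · have h2 : i ≤ (k : ℕ) := h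
            have := k.2
            omega
          · exact lt_irrefl _ hlt2
        have hx := (hEE ⟨(k : ℕ), hkr⟩ (j' k)).mp hn
        have hy : ¬((j' k : ℕ) < (jfun k : ℕ)) := fun h => hx (Or.inr ⟨k.2, h⟩)
        omega
      have h2 : (j' k : ℕ) ≤ (jfun k : ℕ) := by
        have hn : ¬(i ≤ ((⟨(k : ℕ), hkr⟩ : Fin r) : ℕ) ∨
            ∃ hkk : ((⟨(k : ℕ), hkr⟩ : Fin r) : ℕ) < i,
              ((jfun k : Fin s) : ℕ) < (jfun ⟨((⟨(k : ℕ), hkr⟩ : Fin r) : ℕ), hkk⟩ : ℕ)) := by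
          rintro (h | ⟨hkk, hlt2⟩)
          · have h2 : i ≤ (k : ℕ) := h
            have := k.2
            omega
          · exact lt_irrefl _ hlt2
        have hx := (hEE ⟨(k : ℕ), hkr⟩ (jfun k)).mpr hn
        have hy : ¬((jfun k : ℕ) < (j' k : ℕ)) := fun h => hx (Or.inr ⟨k.2, h⟩)
        omega
      exact Fin.ext (le_antisymm h2 h1)
    rw [hjj]
  · set Agen : Matrix (Fin (∑ t, M t)) (Fin (∑ t, N t)) D :=
      ∑ k : Fin i, Matrix.single
        (blockIdx M ⟨(k : ℕ), lt_of_lt_of_le k.2 hir⟩ ⟨0, hM _⟩)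
        (blockIdx N (jfun k) ⟨0, hN _⟩) (1 : D) with hAgen
    refine ⟨Agen, ?_, ?_⟩
    · apply AddSubgroup.sum_mem
      intro k _
      exact hstd (hji k) (le_refl _) (le_refl _) _ _ 1
    · intro K hKT hKl hKr hAK
      have hstdK : ∀ (k : Fin r) (hk : (k : ℕ) < i) (l : Fin s),
          ((jfun ⟨(k : ℕ), hk⟩ : Fin s) : ℕ) ≤ (l : ℕ) →
          ∀ (a : Fin (M k)) (b : Fin (N l)) (c : D),
          Matrix.single (blockIdx M k a) (blockIdx N l b) c ∈ K := by
        intro k hk l hl a b c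
        set k1 : Fin i := ⟨(k : ℕ), hk⟩ with hk1
        set kr : Fin r := ⟨(k1 : ℕ), lt_of_lt_of_le k1.2 hir⟩ with hkr
        have hkrk : kr = k := Fin.ext rfl
        have hP : Matrix.single (blockIdx M k a) (blockIdx M kr ⟨0, hM kr⟩) (1 : D) * Agen =
            Matrix.single (blockIdx M k a) (blockIdx N (jfun k1) ⟨0, hN _⟩) (1 : D) := by
          rw [hAgen, Matrix.mul_sum]
          rw [Finset.sum_eq_single k1]
          · rw [my_std_mul_std, if_pos rfl, one_mul]
          · intro k' _ hne
            rw [my_std_mul_std, if_neg, ]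
            intro hc
            have h := (blockIdx_inj M hc).1
            apply hne
            apply Fin.ext
            exact (congrArg Fin.val h).symm
          · intro h
            exact absurd (Finset.mem_univ k1) h
        have h1 : Matrix.single (blockIdx M k a) (blockIdx N (jfun k1) ⟨0, hN _⟩) (1 : D) ∈ K := by
          rw [← hP]
          exact hKl _ _ (isNest_std M M k kr a _ 1 (le_of_eq rfl)) hAK
        have h2 := hKr _ (Matrix.single (blockIdx N (jfun k1) ⟨0, hN _⟩) (blockIdx N l b) c)
          (isNest_std N N _ l _ b c hl) h1
        rwa [my_std_mul_std, if_pos rfl, one_mul] at h2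
      intro B hB
      have hBE : B ∈ {A : Matrix (Fin (∑ t, M t)) (Fin (∑ t, N t)) D |
          ∀ (k : Fin r) (l : Fin s) (a : Fin (M k)) (b : Fin (N l)),
          (i ≤ (k : ℕ) ∨ ∃ hk : (k : ℕ) < i, (l : ℕ) < (jfun ⟨(k : ℕ), hk⟩ : ℕ)) →
          A (blockIdx M k a) (blockIdx N l b) = 0} := by
        rw [← hJE]; exact hB
      rw [Matrix.matrix_eq_sum_single B]
      apply AddSubgroup.sum_mem
      intro p _
      apply AddSubgroup.sum_mem
      intro q _
      obtain ⟨k, a, rfl⟩ := exists_blockIdx M p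
      obtain ⟨l, b, rfl⟩ := exists_blockIdx N q
      by_cases hcond : (i ≤ (k : ℕ) ∨ ∃ hk : (k : ℕ) < i, (l : ℕ) < (jfun ⟨(k : ℕ), hk⟩ : ℕ))
      · rw [hBE k l a b hcond, Matrix.single_zero]
        exact zero_mem K
      · push_neg at hcond
        exact hstdK k hcond.1 l (Fin.le_def.mp (hcond.2 hcond.1)) a b _
end
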